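/- Let A be a two-block SBM adjacency matrix with parameters (N, p). Then for all distinct indices i ≠ j lying in the same community, E[(A²)_{ij}] = N(1 − 2p + 2p²) − 2p² and E[((A²)_{ij})²] = N²(1 − 2p + 2p²)² + 2Np(1 − 4p + 6p² − 5p³) + 6p⁴ − 2p². -/

import Mathlib

open MeasureTheory ProbabilityTheory Matrix

/-- `i` and `j` lie in the same community, where the communities of `Fin (2*N)` are
`{0, …, N-1}` and `{N, …, 2N-1}`. -/
def sameCom (N : ℕ) (i j : Fin (2 * N)) : Prop := ((i : ℕ) < N ↔ (j : ℕ) < N)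

instance (N : ℕ) (i j : Fin (2 * N)) : Decidable (sameCom N i j) := by
  unfold sameCom; infer_instance

/-- The Bernoulli distribution on `ℝ` with success probability `q`:
mass `q` at `1` and mass `1 - q` at `0`. -/
noncomputable def bernoulliReal (q : ℝ) : Measure ℝ :=
  ENNReal.ofReal q • Measure.dirac (1 : ℝ) + ENNReal.ofReal (1 - q) • Measure.dirac (0 : ℝ)

/-- `A` is a two-block SBM adjacency matrix with parameters `(N, p)` under the measure `μ`. -/
structure IsSBM {Ω : Type*} [MeasurableSpace Ω] (μ : Measure Ω) (N : ℕ) (p : ℝ)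
    (A : Ω → Matrix (Fin (2 * N)) (Fin (2 * N)) ℝ) : Prop where
  isProb : IsProbabilityMeasure μ
  symm : ∀ ω, (A ω)ᵀ = A ω
  diag : ∀ ω i, A ω i i = 0
  vals : ∀ ω i j, A ω i j = 0 ∨ A ω i j = 1
  meas : ∀ i j, Measurable fun ω => A ω i j
  indep : iIndepFun
    (fun (e : {e : Fin (2 * N) × Fin (2 * N) // e.1 < e.2}) ω => A ω e.1.1 e.1.2) μ
  bern : ∀ i j, i < j →
    μ.map (fun ω => A ω i j) = bernoulliReal (if sameCom N i j then p else 1 - p)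

namespace SBMaux

lemma integrable_dirac' {f : ℝ → ℝ} (a : ℝ) : Integrable f (Measure.dirac a) := by
  have h : f =ᵐ[Measure.dirac a] fun _ => f a := by
    simp [Filter.EventuallyEq, MeasureTheory.ae_dirac_eq]
  exact (integrable_const (f a)).congr h.symm

lemma bern_integral (q : ℝ) (h0 : 0 ≤ q) : ∫ x, x ∂(bernoulliReal q) = q := by
  rw [bernoulliReal, integral_add_measure, integral_smul_measure, integral_smul_measure,
    integral_dirac, integral_dirac]
  · rw [ENNReal.toReal_ofReal h0]; simp
  · exact (Integrable.smul_measure (integrable_dirac' 1) ENNReal.ofReal_ne_top)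
  · exact (Integrable.smul_measure (integrable_dirac' 0) ENNReal.ofReal_ne_top)

variable {Ω : Type*} [MeasurableSpace Ω] {μ : Measure Ω} {N : ℕ} {p : ℝ}
  {A : Ω → Matrix (Fin (2 * N)) (Fin (2 * N)) ℝ}

/-- The marginal success probability of an entry. -/
noncomputable def qv (N : ℕ) (p : ℝ) (a b : Fin (2 * N)) : ℝ :=
  if sameCom N a b then p else 1 - p

lemma qv_symm (a b : Fin (2 * N)) : qv N p a b = qv N p b a := by
  by_cases h : sameCom N a b
  · rw [qv, if_pos h, qv, if_pos (show sameCom N b a from Iff.symm h)]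
  · rw [qv, if_neg h, qv, if_neg (show ¬sameCom N b a from fun hh => h (Iff.symm hh))]

lemma entry_symm (hA : IsSBM μ N p A) (ω : Ω) (a b : Fin (2 * N)) :
    A ω a b = A ω b a := by
  have h := congrArg (fun M => M b a) (hA.symm ω)
  simpa using h

lemma entry_abs (hA : IsSBM μ N p A) (ω : Ω) (a b : Fin (2 * N)) : |A ω a b| ≤ 1 := by
  rcases hA.vals ω a b with h | h <;> simp [h]

lemma integrable_of_bdd (hA : IsSBM μ N p A) {f : Ω → ℝ} (hm : Measurable f)
    (hb : ∀ ω, |f ω| ≤ 1) : Integrable f μ := by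
  haveI := hA.isProb
  exact (integrable_const (1 : ℝ)).mono' hm.aestronglyMeasurable
    (Filter.Eventually.of_forall fun ω => by simpa [Real.norm_eq_abs] using hb ω)

lemma entry_integral (hA : IsSBM μ N p A) (hp0 : 0 ≤ p) (hp1 : p ≤ 1)
    {a b : Fin (2 * N)} (hab : a < b) : ∫ ω, A ω a b ∂μ = qv N p a b := by
  have hm := hA.meas a b
  have h1 : (∫ ω, A ω a b ∂μ) = ∫ x, id x ∂(μ.map fun ω => A ω a b) :=
    (integral_map hm.aemeasurable aestronglyMeasurable_id).symm
  rw [h1, hA.bern a b hab]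
  unfold qv
  simp only [id_eq]
  split_ifs with h
  · exact bern_integral p hp0
  · exact bern_integral (1 - p) (by linarith)

lemma entry_integral' (hA : IsSBM μ N p A) (hp0 : 0 ≤ p) (hp1 : p ≤ 1)
    {a b : Fin (2 * N)} (hab : a ≠ b) : ∫ ω, A ω a b ∂μ = qv N p a b := by
  rcases lt_or_gt_of_ne hab with h | h
  · exact entry_integral hA hp0 hp1 h
  · calc ∫ ω, A ω a b ∂μ = ∫ ω, A ω b a ∂μ := by
          exact integral_congr_ae (Filter.Eventually.of_forall fun ω => entry_symm hA ω a b)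
    _ = qv N p b a := entry_integral hA hp0 hp1 h
    _ = qv N p a b := (qv_symm a b).symm

/-- The ordered-pair index of the unordered pair `{a, b}`. -/
def op (a b : Fin (2 * N)) (h : a ≠ b) : {e : Fin (2 * N) × Fin (2 * N) // e.1 < e.2} :=
  if hl : a < b then ⟨(a, b), hl⟩ else ⟨(b, a), lt_of_le_of_ne (not_lt.mp hl) h.symm⟩

lemma op_spec (a b : Fin (2 * N)) (h : a ≠ b) :
    ((op a b h).1.1 = a ∧ (op a b h).1.2 = b) ∨
      ((op a b h).1.1 = b ∧ (op a b h).1.2 = a) := by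
  unfold op; split_ifs <;> simp

lemma entry_op (hA : IsSBM μ N p A) (ω : Ω) (a b : Fin (2 * N)) (h : a ≠ b) :
    A ω (op a b h).1.1 (op a b h).1.2 = A ω a b := by
  rcases op_spec a b h with ⟨h1, h2⟩ | ⟨h1, h2⟩
  · rw [h1, h2]
  · rw [h1, h2]; exact entry_symm hA ω b a

lemma op_ne {a b c d : Fin (2 * N)} (h1 : a ≠ b) (h2 : c ≠ d)
    (hh : ¬((a = c ∧ b = d) ∨ (a = d ∧ b = c))) : op a b h1 ≠ op c d h2 := by
  intro he
  rcases op_spec a b h1 with ⟨e1, e2⟩ | ⟨e1, e2⟩ <;>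
    rcases op_spec c d h2 with ⟨f1, f2⟩ | ⟨f1, f2⟩ <;> rw [he] at e1 e2
  · exact hh (Or.inl ⟨e1.symm.trans f1, e2.symm.trans f2⟩)
  · exact hh (Or.inr ⟨e1.symm.trans f1, e2.symm.trans f2⟩)
  · exact hh (Or.inr ⟨e2.symm.trans f2, e1.symm.trans f1⟩)
  · exact hh (Or.inl ⟨e2.symm.trans f2, e1.symm.trans f1⟩)

lemma prod_int (hA : IsSBM μ N p A) (hp0 : 0 ≤ p) (hp1 : p ≤ 1)
    {a b c d : Fin (2 * N)} (hab : a ≠ b) (hcd : c ≠ d)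
    (hne : ¬((a = c ∧ b = d) ∨ (a = d ∧ b = c))) :
    ∫ ω, A ω a b * A ω c d ∂μ = qv N p a b * qv N p c d := by
  haveI := hA.isProb
  have hfun1 : (fun ω => A ω a b) =
      (fun (e : {e : Fin (2 * N) × Fin (2 * N) // e.1 < e.2}) ω => A ω e.1.1 e.1.2)
        (op a b hab) := funext fun ω => (entry_op hA ω a b hab).symm
  have hfun2 : (fun ω => A ω c d) =
      (fun (e : {e : Fin (2 * N) × Fin (2 * N) // e.1 < e.2}) ω => A ω e.1.1 e.1.2)
        (op c d hcd) := funext fun ω => (entry_op hA ω c d hcd).symm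
  have hi : IndepFun (fun ω => A ω a b) (fun ω => A ω c d) μ := by
    rw [hfun1, hfun2]
    exact hA.indep.indepFun (op_ne hab hcd hne)
  have key := hi.integral_mul_eq_mul_integral (hA.meas a b).aestronglyMeasurable
    (hA.meas c d).aestronglyMeasurable
  calc ∫ ω, A ω a b * A ω c d ∂μ
      = ∫ ω, ((fun ω => A ω a b) * fun ω => A ω c d) ω ∂μ := rfl
    _ = (∫ ω, A ω a b ∂μ) * ∫ ω, A ω c d ∂μ := key
    _ = qv N p a b * qv N p c d := by
        rw [entry_integral' hA hp0 hp1 hab, entry_integral' hA hp0 hp1 hcd]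

lemma X_int (hA : IsSBM μ N p A) (hp0 : 0 ≤ p) (hp1 : p ≤ 1)
    {i j k : Fin (2 * N)} (hij : i ≠ j) (hki : k ≠ i) (hkj : k ≠ j) :
    ∫ ω, A ω i k * A ω k j ∂μ = qv N p i k * qv N p k j :=
  prod_int hA hp0 hp1 (Ne.symm hki) hkj
    (fun h => h.elim (fun ⟨h1, _⟩ => hki h1.symm) (fun ⟨h1, _⟩ => hij h1))

lemma XX_int (hA : IsSBM μ N p A) (hp0 : 0 ≤ p) (hp1 : p ≤ 1)
    {i j k l : Fin (2 * N)} (hij : i ≠ j) (hki : k ≠ i) (hkj : k ≠ j)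
    (hli : l ≠ i) (hlj : l ≠ j) (hkl : k ≠ l) :
    ∫ ω, (A ω i k * A ω k j) * (A ω i l * A ω l j) ∂μ
      = (qv N p i k * qv N p k j) * (qv N p i l * qv N p l j) := by
  haveI := hA.isProb
  set F : {e : Fin (2 * N) × Fin (2 * N) // e.1 < e.2} → Ω → ℝ :=
    fun e ω => A ω e.1.1 e.1.2 with hF
  set e1 := op i k (Ne.symm hki)
  set e2 := op k j hkj
  set e3 := op i l (Ne.symm hli)
  set e4 := op l j hlj
  have h13 : e1 ≠ e3 := op_ne _ _
    (fun h => h.elim (fun ⟨_, h2⟩ => hkl h2) (fun ⟨h1, _⟩ => hli h1.symm))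
  have h14 : e1 ≠ e4 := op_ne _ _
    (fun h => h.elim (fun ⟨h1, _⟩ => hli h1.symm) (fun ⟨h1, _⟩ => hij h1))
  have h23 : e2 ≠ e3 := op_ne _ _
    (fun h => h.elim (fun ⟨h1, _⟩ => hki h1) (fun ⟨h1, _⟩ => hkl h1))
  have h24 : e2 ≠ e4 := op_ne _ _
    (fun h => h.elim (fun ⟨h1, _⟩ => hkl h1) (fun ⟨h1, _⟩ => hkj h1))
  have hmeas : ∀ e, Measurable (F e) := fun e => hA.meas _ _
  have hind : IndepFun (F e1 * F e2) (F e3 * F e4) μ :=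
    hA.indep.indepFun_mul_mul hmeas e1 e2 e3 e4 h13 h14 h23 h24
  have key := hind.integral_mul_eq_mul_integral
    (((hmeas e1).mul (hmeas e2)).aestronglyMeasurable)
    (((hmeas e3).mul (hmeas e4)).aestronglyMeasurable)
  have heq : ∀ ω, ((F e1 * F e2) * (F e3 * F e4)) ω
      = (A ω i k * A ω k j) * (A ω i l * A ω l j) := by
    intro ω
    simp only [Pi.mul_apply, hF, e1, e2, e3, e4, entry_op hA]
  have heq2 : ∀ ω, (F e1 * F e2) ω = A ω i k * A ω k j := by
    intro ω; simp only [Pi.mul_apply, hF, e1, e2, entry_op hA]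
  have heq3 : ∀ ω, (F e3 * F e4) ω = A ω i l * A ω l j := by
    intro ω; simp only [Pi.mul_apply, hF, e3, e4, entry_op hA]
  calc ∫ ω, (A ω i k * A ω k j) * (A ω i l * A ω l j) ∂μ
      = ∫ ω, ((F e1 * F e2) * (F e3 * F e4)) ω ∂μ :=
        integral_congr_ae (Filter.Eventually.of_forall fun ω => (heq ω).symm)
    _ = (∫ ω, (F e1 * F e2) ω ∂μ) * ∫ ω, (F e3 * F e4) ω ∂μ := key
    _ = (∫ ω, A ω i k * A ω k j ∂μ) * ∫ ω, A ω i l * A ω l j ∂μ := by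
        rw [integral_congr_ae (Filter.Eventually.of_forall heq2),
          integral_congr_ae (Filter.Eventually.of_forall heq3)]
    _ = (qv N p i k * qv N p k j) * (qv N p i l * qv N p l j) := by
        rw [X_int hA hp0 hp1 hij hki hkj, X_int hA hp0 hp1 hij hli hlj]

lemma card_lt (N : ℕ) :
    (Finset.univ.filter (fun k : Fin (2 * N) => (k : ℕ) < N)).card = N := by
  have hle : N ≤ 2 * N := by omega
  have : Finset.univ.filter (fun k : Fin (2 * N) => (k : ℕ) < N)
      = Finset.univ.map (Fin.castLEEmb hle) := by
    ext k
    simp only [Finset.mem_filter, Finset.mem_univ, true_and, Finset.mem_map,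
      Fin.castLEEmb_apply, Fin.ext_iff, Fin.coe_castLE]
    constructor
    · intro h; exact ⟨⟨(k : ℕ), h⟩, by simp⟩
    · rintro ⟨a, ha⟩; rw [← ha]; exact a.2
  rw [this, Finset.card_map, Finset.card_univ, Fintype.card_fin]

lemma card_ge (N : ℕ) :
    (Finset.univ.filter (fun k : Fin (2 * N) => ¬(k : ℕ) < N)).card = N := by
  rw [Finset.filter_not, Finset.card_sdiff_of_subset (Finset.filter_subset _ _), card_lt,
    Finset.card_univ, Fintype.card_fin]
  omega

lemma card_same (N : ℕ) (i : Fin (2 * N)) :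
    (Finset.univ.filter (fun k : Fin (2 * N) => sameCom N i k)).card = N := by
  by_cases hi : (i : ℕ) < N
  · have : Finset.univ.filter (fun k : Fin (2 * N) => sameCom N i k)
        = Finset.univ.filter (fun k : Fin (2 * N) => (k : ℕ) < N) := by
      apply Finset.filter_congr; intro k _; unfold sameCom; simp [hi]
    rw [this, card_lt]
  · have : Finset.univ.filter (fun k : Fin (2 * N) => sameCom N i k)
        = Finset.univ.filter (fun k : Fin (2 * N) => ¬(k : ℕ) < N) := by
      apply Finset.filter_congr; intro k _; unfold sameCom; simp [hi]
    rw [this, card_ge]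

lemma card_notsame (N : ℕ) (i : Fin (2 * N)) :
    (Finset.univ.filter (fun k : Fin (2 * N) => ¬sameCom N i k)).card = N := by
  rw [Finset.filter_not, Finset.card_sdiff_of_subset (Finset.filter_subset _ _), card_same,
    Finset.card_univ, Fintype.card_fin]
  omega

lemma sum_helper {N : ℕ} (i j : Fin (2 * N)) (hij : i ≠ j) (hcom : sameCom N i j)
    (c d : ℝ) :
    ∑ k : Fin (2 * N), (if k = i ∨ k = j then (0 : ℝ)
        else if sameCom N i k then c else d)
      = (N : ℝ) * c + (N : ℝ) * d - 2 * c := by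
  have key : ∀ k : Fin (2 * N), (if k = i ∨ k = j then (0 : ℝ)
        else if sameCom N i k then c else d)
      = (if sameCom N i k then c else d)
        - ((if k = i then c else 0) + (if k = j then c else 0)) := by
    intro k
    by_cases h1 : k = i
    · subst h1
      rw [if_pos (Or.inl rfl), if_pos (show sameCom N k k from Iff.rfl), if_pos rfl, if_neg hij]; ring
    · by_cases h2 : k = j
      · subst h2
        rw [if_pos (Or.inr rfl), if_pos (show sameCom N i k from hcom), if_neg h1, if_pos rfl]; ring
      · rw [if_neg (by tauto)]; rw [if_neg h1, if_neg h2]; ring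
  rw [Finset.sum_congr rfl (fun k _ => key k), Finset.sum_sub_distrib,
    Finset.sum_add_distrib, Finset.sum_ite_eq' Finset.univ i (fun _ => c),
    Finset.sum_ite_eq' Finset.univ j (fun _ => c), Finset.sum_ite, Finset.sum_const,
    Finset.sum_const, card_same, card_notsame]
  simp only [Finset.mem_univ, if_pos, nsmul_eq_mul]
  ring

end SBMaux

open SBMaux

theorem stmt10 {Ω : Type*} [MeasurableSpace Ω] (μ : Measure Ω) (N : ℕ) (hN : 1 ≤ N)
    (p : ℝ) (hp : 1 / 2 < p) (hp1 : p ≤ 1)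
    (A : Ω → Matrix (Fin (2 * N)) (Fin (2 * N)) ℝ) (hA : IsSBM μ N p A)
    (i j : Fin (2 * N)) (hij : i ≠ j) (hcom : sameCom N i j) :
    (∫ ω, ((A ω) ^ 2) i j ∂μ) = (N : ℝ) * (1 - 2 * p + 2 * p ^ 2) - 2 * p ^ 2 ∧
    (∫ ω, (((A ω) ^ 2) i j) ^ 2 ∂μ) =
      (N : ℝ) ^ 2 * (1 - 2 * p + 2 * p ^ 2) ^ 2
        + 2 * N * p * (1 - 4 * p + 6 * p ^ 2 - 5 * p ^ 3) + 6 * p ^ 4 - 2 * p ^ 2 := by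
  haveI := hA.isProb
  have hp0 : (0 : ℝ) ≤ p := by linarith
  set X : Fin (2 * N) → Ω → ℝ := fun k ω => A ω i k * A ω k j with hX
  have hXmeas : ∀ k, Measurable (X k) := fun k => (hA.meas i k).mul (hA.meas k j)
  have hXbd : ∀ k ω, |X k ω| ≤ 1 := by
    intro k ω
    rw [hX]
    simp only [abs_mul]
    exact mul_le_one₀ (entry_abs hA ω i k) (abs_nonneg _) (entry_abs hA ω k j)
  have hXint : ∀ k, Integrable (X k) μ := fun k =>
    integrable_of_bdd hA (hXmeas k) (hXbd k)
  have hXXint : ∀ k l, Integrable (fun ω => X k ω * X l ω) μ := by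
    intro k l
    refine integrable_of_bdd hA ((hXmeas k).mul (hXmeas l)) fun ω => ?_
    rw [abs_mul]
    exact mul_le_one₀ (hXbd k ω) (abs_nonneg _) (hXbd l ω)
  have hsq : ∀ ω, ((A ω) ^ 2) i j = ∑ k, X k ω := by
    intro ω; rw [pow_two, Matrix.mul_apply]
  set g : Fin (2 * N) → ℝ :=
    fun k => if k = i ∨ k = j then 0 else qv N p i k * qv N p k j with hg
  have hXzero : ∀ k, (k = i ∨ k = j) → ∀ ω, X k ω = 0 := by
    intro k hk ω
    rcases hk with rfl | rfl
    · rw [hX]; simp [hA.diag ω]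
    · rw [hX]; simp [hA.diag ω]
  have hEX : ∀ k, ∫ ω, X k ω ∂μ = g k := by
    intro k
    by_cases hk : k = i ∨ k = j
    · rw [hg]
      simp only [hk, if_true]
      rw [integral_congr_ae (Filter.Eventually.of_forall (hXzero k hk)), integral_zero]
    · push_neg at hk
      rw [hg]
      simp only [hk.1, hk.2, or_self, if_false]
      exact X_int hA hp0 hp1 hij hk.1 hk.2
  have hXsq : ∀ k ω, X k ω * X k ω = X k ω := by
    intro k ω
    rw [hX]
    rcases hA.vals ω i k with h | h <;> rcases hA.vals ω k j with h' | h' <;>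
      simp [h, h']
  have hEXX : ∀ k l, ∫ ω, X k ω * X l ω ∂μ = if k = l then g k else g k * g l := by
    intro k l
    by_cases hkl : k = l
    · subst hkl
      rw [if_pos rfl, integral_congr_ae (Filter.Eventually.of_forall (fun ω => hXsq k ω))]
      exact hEX k
    · rw [if_neg hkl]
      by_cases hk : k = i ∨ k = j
      · have hz : ∀ ω, X k ω * X l ω = 0 := fun ω => by rw [hXzero k hk ω, zero_mul]
        rw [integral_congr_ae (Filter.Eventually.of_forall hz), integral_zero]
        have : g k = 0 := by rw [hg]; simp only [hk, if_true]
        rw [this, zero_mul]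
      · by_cases hl : l = i ∨ l = j
        · have hz : ∀ ω, X k ω * X l ω = 0 := fun ω => by rw [hXzero l hl ω, mul_zero]
          rw [integral_congr_ae (Filter.Eventually.of_forall hz), integral_zero]
          have : g l = 0 := by rw [hg]; simp only [hl, if_true]
          rw [this, mul_zero]
        · push_neg at hk hl
          have := XX_int hA hp0 hp1 hij hk.1 hk.2 hl.1 hl.2 hkl
          rw [hg]
          simp only [hk.1, hk.2, hl.1, hl.2, or_self, if_false]
          exact this
  -- the shape of g
  have hgshape : ∀ k, g k = if k = i ∨ k = j then (0 : ℝ)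
      else if sameCom N i k then p ^ 2 else (1 - p) ^ 2 := by
    intro k
    rw [hg]
    by_cases hk : k = i ∨ k = j
    · simp only [hk, if_true]
    · simp only [hk, if_false]
      by_cases hs : sameCom N i k
      · have hs2 : sameCom N k j := Iff.trans (Iff.symm hs) hcom
        rw [qv, if_pos hs, qv, if_pos hs2, if_pos hs]; ring
      · have hs2 : ¬sameCom N k j := fun h => hs (Iff.trans hcom (Iff.symm h))
        rw [qv, if_neg hs, qv, if_neg hs2, if_neg hs]; ring
  have hsumg : ∑ k, g k = (N : ℝ) * p ^ 2 + (N : ℝ) * (1 - p) ^ 2 - 2 * p ^ 2 := by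
    rw [Finset.sum_congr rfl (fun k _ => hgshape k)]
    exact sum_helper i j hij hcom (p ^ 2) ((1 - p) ^ 2)
  have hsumgg : ∑ k, g k * g k
      = (N : ℝ) * p ^ 4 + (N : ℝ) * (1 - p) ^ 4 - 2 * p ^ 4 := by
    have : ∀ k, g k * g k = if k = i ∨ k = j then (0 : ℝ)
        else if sameCom N i k then p ^ 4 else (1 - p) ^ 4 := by
      intro k
      rw [hgshape k]
      by_cases hk : k = i ∨ k = j
      · simp only [hk, if_true, mul_zero]
      · simp only [hk, if_false]
        by_cases hs : sameCom N i k
        · rw [if_pos hs, if_pos hs]; ring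
        · rw [if_neg hs, if_neg hs]; ring
    rw [Finset.sum_congr rfl (fun k _ => this k)]
    exact sum_helper i j hij hcom (p ^ 4) ((1 - p) ^ 4)
  have hM1 : (∫ ω, ((A ω) ^ 2) i j ∂μ) = ∑ k, g k := by
    calc (∫ ω, ((A ω) ^ 2) i j ∂μ) = ∫ ω, ∑ k, X k ω ∂μ :=
          integral_congr_ae (Filter.Eventually.of_forall hsq)
      _ = ∑ k, ∫ ω, X k ω ∂μ := integral_finset_sum _ (fun k _ => hXint k)
      _ = ∑ k, g k := Finset.sum_congr rfl fun k _ => hEX k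
  have hM2 : (∫ ω, (((A ω) ^ 2) i j) ^ 2 ∂μ)
      = (∑ k, g k) * (∑ k, g k) + (∑ k, g k) - ∑ k, g k * g k := by
    have hexp : ∀ ω, (((A ω) ^ 2) i j) ^ 2 = ∑ k, ∑ l, X k ω * X l ω := by
      intro ω
      rw [hsq ω, pow_two, Finset.sum_mul_sum]
    calc (∫ ω, (((A ω) ^ 2) i j) ^ 2 ∂μ)
        = ∫ ω, ∑ k, ∑ l, X k ω * X l ω ∂μ :=
          integral_congr_ae (Filter.Eventually.of_forall hexp)
      _ = ∑ k, ∫ ω, ∑ l, X k ω * X l ω ∂μ :=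
          integral_finset_sum _ (fun k _ => integrable_finset_sum _ (fun l _ => hXXint k l))
      _ = ∑ k, ∑ l, ∫ ω, X k ω * X l ω ∂μ :=
          Finset.sum_congr rfl fun k _ => integral_finset_sum _ (fun l _ => hXXint k l)
      _ = ∑ k, ∑ l, (if k = l then g k else g k * g l) :=
          Finset.sum_congr rfl fun k _ => Finset.sum_congr rfl fun l _ => hEXX k l
      _ = ∑ k, (g k * (∑ l, g l) + (g k - g k * g k)) := by
          refine Finset.sum_congr rfl fun k _ => ?_
          have hpt : ∀ l, (if k = l then g k else g k * g l)
              = g k * g l + (if l = k then g k - g k * g k else 0) := by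
            intro l
            by_cases h : k = l
            · subst h; rw [if_pos rfl, if_pos rfl]; ring
            · rw [if_neg h, if_neg (Ne.symm h), add_zero]
          rw [Finset.sum_congr rfl (fun l _ => hpt l), Finset.sum_add_distrib,
            ← Finset.mul_sum, Finset.sum_ite_eq' Finset.univ k
              (fun _ => g k - g k * g k)]
          simp
      _ = (∑ k, g k) * (∑ k, g k) + (∑ k, g k) - ∑ k, g k * g k := by
          rw [Finset.sum_add_distrib, ← Finset.sum_mul, Finset.sum_sub_distrib]
          ring
  constructor
  · rw [hM1, hsumg]; ring
  · rw [hM2, hsumg, hsumgg]; ring
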